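/- Let M₀, M₁ : Matrix (Fin n) (Fin n) ℝ with M₀ symmetric and invertible, let N₀, N₁ : Matrix (Fin n) (Fin q) ℝ, z : Fin q → ℝ, and let Σ : Matrix (Fin n) (Fin n) ℝ be positive definite. Set V̄ = −M₀⁻¹·(N₀·z), so that M₀·V̄ + N₀·z = 0. Let μ : ℝ and suppose M_μ := M₀ + μ·M₁ is symmetric and invertible; set V_μ = −M_μ⁻¹·((N₀ + μ·N₁)·z). Let (Ω, P) be a probability space and U : Ω → (Fin n → ℝ) a random vector with integrable components and pairwise products, mean V̄, and covariance matrix Σ. Then E[(U − V_μ)ᵀ Σ⁻¹ (U − V_μ)] = μ² · (M₁·V̄ + N₁·z)ᵀ (M_μᵀ Σ M_μ)⁻¹ (M₁·V̄ + N₁·z) + n. In particular E[(U − V_μ)ᵀ Σ⁻¹ (U − V_μ)] ≥ n, with equality when μ = 0. -/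

import Mathlib

open Matrix MeasureTheory

/-- Claim 1 in the proof of Theorem 1: with `V̄ = −M₀⁻¹ N₀ z`,
`M_μ = M₀ + μ M₁`, `V_μ = −M_μ⁻¹ (N₀ + μ N₁) z`, and a random vector `U`
with mean `V̄` and covariance `Σ`,
`E[(U − V_μ)ᵀ Σ⁻¹ (U − V_μ)] = μ² ‖M₁ V̄ + N₁ z‖_{(M_μᵀ Σ M_μ)⁻¹} + n ≥ n`,
with equality when `μ = 0`. -/
theorem method3_expected_loglikelihood
    (n q : ℕ) (M₀ M₁ : Matrix (Fin n) (Fin n) ℝ)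
    (hM₀symm : M₀.IsSymm) (hM₀inv : IsUnit M₀.det)
    (N₀ N₁ : Matrix (Fin n) (Fin q) ℝ) (z : Fin q → ℝ)
    (S : Matrix (Fin n) (Fin n) ℝ) (hS : S.PosDef)
    (Vbar : Fin n → ℝ) (hVbar : Vbar = -(M₀⁻¹.mulVec (N₀.mulVec z)))
    (hstat : M₀.mulVec Vbar + N₀.mulVec z = 0)
    (μ : ℝ) (Mμ : Matrix (Fin n) (Fin n) ℝ) (hMμ : Mμ = M₀ + μ • M₁)
    (hMμsymm : Mμ.IsSymm) (hMμinv : IsUnit Mμ.det)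
    (Vμ : Fin n → ℝ) (hVμ : Vμ = -(Mμ⁻¹.mulVec ((N₀ + μ • N₁).mulVec z)))
    {Ω : Type*} [MeasurableSpace Ω] (P : Measure Ω) [IsProbabilityMeasure P]
    (U : Ω → Fin n → ℝ)
    (hint : ∀ i, Integrable (fun ω => U ω i) P)
    (hint2 : ∀ i j, Integrable (fun ω => U ω i * U ω j) P)
    (hmean : ∀ i, ∫ ω, U ω i ∂P = Vbar i)
    (hcov : ∀ i j, ∫ ω, (U ω i - Vbar i) * (U ω j - Vbar j) ∂P = S i j) :
    (∫ ω, dotProduct (U ω - Vμ) (S⁻¹.mulVec (U ω - Vμ)) ∂P =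
        μ ^ 2 * dotProduct (M₁.mulVec Vbar + N₁.mulVec z)
          ((Mμᵀ * S * Mμ)⁻¹.mulVec (M₁.mulVec Vbar + N₁.mulVec z)) + n) ∧
      ((n : ℝ) ≤ ∫ ω, dotProduct (U ω - Vμ) (S⁻¹.mulVec (U ω - Vμ)) ∂P) ∧
      (μ = 0 → ∫ ω, dotProduct (U ω - Vμ) (S⁻¹.mulVec (U ω - Vμ)) ∂P = n) := by
  set w : Fin n → ℝ := M₁.mulVec Vbar + N₁.mulVec z with hw
  set d : Fin n → ℝ := Vbar - Vμ with hd
  have hSdet : IsUnit S.det := isUnit_iff_ne_zero.mpr hS.det_pos.ne'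
  -- integrability of shifted products
  have hintm : ∀ (i j : Fin n) (a b : ℝ),
      Integrable (fun ω => (U ω i - a) * (U ω j - b)) P := by
    intro i j a b
    have heq : (fun ω => (U ω i - a) * (U ω j - b)) =
        fun ω => U ω i * U ω j - b * U ω i - a * U ω j + a * b := by
      funext ω; ring
    rw [heq]
    exact (((hint2 i j).sub ((hint i).const_mul _)).sub
      ((hint j).const_mul _)).add (integrable_const _)
  -- the key second-moment computation
  have key : ∀ i j, ∫ ω, (U ω i - Vμ i) * (U ω j - Vμ j) ∂P = S i j + d i * d j := by
    intro i j
    have hfun : (fun ω => (U ω i - Vμ i) * (U ω j - Vμ j)) =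
        fun ω => (U ω i - Vbar i) * (U ω j - Vbar j) +
          ((Vbar j - Vμ j) * U ω i + ((Vbar i - Vμ i) * U ω j +
            (Vμ i * Vμ j - Vbar i * Vbar j))) := by
      funext ω; ring
    have hg1 : Integrable (fun ω => (Vbar j - Vμ j) * U ω i + ((Vbar i - Vμ i) * U ω j +
        (Vμ i * Vμ j - Vbar i * Vbar j))) P :=
      ((hint i).const_mul _).add (((hint j).const_mul _).add (integrable_const _))
    have hg2 : Integrable (fun ω => (Vbar i - Vμ i) * U ω j +
        (Vμ i * Vμ j - Vbar i * Vbar j)) P :=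
      ((hint j).const_mul _).add (integrable_const _)
    rw [hfun, integral_add (hintm i j _ _) hg1,
      integral_add ((hint i).const_mul _ : Integrable (fun ω => (Vbar j - Vμ j) * U ω i) P) hg2,
      integral_add ((hint j).const_mul _ : Integrable (fun ω => (Vbar i - Vμ i) * U ω j) P)
        (integrable_const _),
      integral_const_mul, integral_const_mul, integral_const, hcov, hmean, hmean]
    simp only [hd, Pi.sub_apply, measure_univ, probReal_univ, ENNReal.toReal_one, smul_eq_mul, one_mul]
    ring
  -- expand the quadratic form and integrate
  have hmain : ∫ ω, dotProduct (U ω - Vμ) (S⁻¹.mulVec (U ω - Vμ)) ∂P =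
      ∑ i, ∑ j, S⁻¹ i j * (S i j + d i * d j) := by
    have h1 : ∀ ω, dotProduct (U ω - Vμ) (S⁻¹.mulVec (U ω - Vμ)) =
        ∑ i, ∑ j, S⁻¹ i j * ((U ω i - Vμ i) * (U ω j - Vμ j)) := by
      intro ω
      simp only [dotProduct, mulVec, Pi.sub_apply, Finset.mul_sum]
      refine Finset.sum_congr rfl fun i _ => Finset.sum_congr rfl fun j _ => by ring
    simp_rw [h1]
    rw [integral_finset_sum _ (f := fun i ω => ∑ j, S⁻¹ i j * ((U ω i - Vμ i) * (U ω j - Vμ j)))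
      (fun i _ => integrable_finset_sum _
      (fun j _ => (hintm i j _ _).const_mul _))]
    refine Finset.sum_congr rfl fun i _ => ?_
    rw [integral_finset_sum _ (f := fun j ω => S⁻¹ i j * ((U ω i - Vμ i) * (U ω j - Vμ j)))
      (fun j _ => (hintm i j _ _).const_mul _)]
    exact Finset.sum_congr rfl fun j _ => by rw [integral_const_mul, key]
  -- trace term
  have hSsymm : ∀ i j, S i j = S j i := by
    intro i j
    rw [← hcov i j, ← hcov j i]
    exact integral_congr_ae (Filter.Eventually.of_forall fun ω => mul_comm _ _)
  have htr : ∑ i, ∑ j, S⁻¹ i j * S i j = (n : ℝ) := by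
    have h1 : S⁻¹ * S = 1 := Matrix.nonsing_inv_mul S hSdet
    have h2 : ∀ i : Fin n, ∑ j, S⁻¹ i j * S i j = (1 : Matrix (Fin n) (Fin n) ℝ) i i := by
      intro i
      rw [← h1, Matrix.mul_apply]
      exact Finset.sum_congr rfl fun j _ => by rw [hSsymm i j]
    simp [h2, Matrix.one_apply]
  -- quadratic term
  have hquad : ∑ i, ∑ j, S⁻¹ i j * (d i * d j) = dotProduct d (S⁻¹.mulVec d) := by
    simp only [dotProduct, mulVec, Finset.mul_sum]
    refine Finset.sum_congr rfl fun i _ => Finset.sum_congr rfl fun j _ => by ring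
  -- d in terms of w
  have hMd : Mμ.mulVec d = μ • w := by
    have h1 : Mμ.mulVec Vμ = -((N₀ + μ • N₁).mulVec z) := by
      rw [hVμ, Matrix.mulVec_neg, Matrix.mulVec_mulVec,
        Matrix.mul_nonsing_inv _ hMμinv, Matrix.one_mulVec]
    have h0 : M₀.mulVec Vbar = -(N₀.mulVec z) := eq_neg_of_add_eq_zero_left hstat
    rw [hd, Matrix.mulVec_sub, h1, hMμ, Matrix.add_mulVec, Matrix.smul_mulVec, h0,
      Matrix.add_mulVec, Matrix.smul_mulVec, hw, smul_add]
    abel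
  have hdval : d = μ • Mμ⁻¹.mulVec w := by
    have h := congrArg (Mμ⁻¹.mulVec) hMd
    rwa [Matrix.mulVec_mulVec, Matrix.nonsing_inv_mul _ hMμinv, Matrix.one_mulVec,
      Matrix.mulVec_smul] at h
  -- inverse of the conjugated matrix
  have hinv : (Mμᵀ * S * Mμ)⁻¹ = Mμ⁻¹ * S⁻¹ * Mμ⁻¹ := by
    rw [Matrix.mul_inv_rev, Matrix.mul_inv_rev, hMμsymm.eq, Matrix.mul_assoc]
  -- the quadratic term equals μ² ‖w‖
  have hquad2 : dotProduct d (S⁻¹.mulVec d) =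
      μ ^ 2 * dotProduct w ((Mμᵀ * S * Mμ)⁻¹.mulVec w) := by
    rw [hinv, hdval]
    have hBt : (Mμ⁻¹)ᵀ = Mμ⁻¹ := by rw [Matrix.transpose_nonsing_inv, hMμsymm.eq]
    have h4 : dotProduct (Mμ⁻¹.mulVec w) (S⁻¹.mulVec (Mμ⁻¹.mulVec w)) =
        dotProduct w ((Mμ⁻¹ * S⁻¹ * Mμ⁻¹).mulVec w) := by
      rw [Matrix.mulVec_mulVec, dotProduct_comm, Matrix.dotProduct_mulVec,
        ← Matrix.mulVec_transpose, dotProduct_comm, ← Matrix.mulVec_mulVec,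
        ← Matrix.mulVec_mulVec]
      rw [hBt]
      rw [Matrix.mulVec_mulVec, Matrix.mulVec_mulVec, Matrix.mul_assoc]
    rw [Matrix.mulVec_smul, smul_dotProduct, dotProduct_smul, h4, smul_eq_mul, smul_eq_mul]
    ring
  -- put everything together
  have hfinal : ∫ ω, dotProduct (U ω - Vμ) (S⁻¹.mulVec (U ω - Vμ)) ∂P =
      μ ^ 2 * dotProduct w ((Mμᵀ * S * Mμ)⁻¹.mulVec w) + n := by
    rw [hmain]
    simp_rw [mul_add, Finset.sum_add_distrib]
    rw [htr, hquad, hquad2, add_comm]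
  refine ⟨hfinal, ?_, ?_⟩
  · rw [hfinal]
    have hnn : 0 ≤ dotProduct d (S⁻¹.mulVec d) := by
      have := hS.inv.posSemidef.dotProduct_mulVec_nonneg d
      simpa using this
    rw [← hquad2]
    linarith
  · intro hμ0
    rw [hfinal, hμ0]
    ring
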